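/- Fix t > 0 and E ⊆ ℕ₀, and let f = f_{χ_E} : ℕ₀ → ℝ be the Stein solution associated to the indicator function χ_E, i.e. f(0) = 0 and f(k) = ((k−1)!/t^k) Σ_{i=0}^{k−1} (χ_E(i) − ν_t(E)) t^i/i! for k ≥ 1. Then for every m ∈ ℕ: Σ_{k=1}^m |f(k)| ≤ m if m ≤ t, and Σ_{k=1}^m |f(k)| ≤ t + (2+t) log(m/t) if m > t. -/

import Mathlib

open Filter Set Topology

/-- `ν_t(E) = Σ_{k ∈ E} e^{-t} t^k / k!`, the Poisson measure of `E ⊆ ℕ₀`. -/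
noncomputable def nuT (t : ℝ) (E : Set ℕ) : ℝ :=
  ∑' k : E, Real.exp (-t) * t ^ (k : ℕ) / (Nat.factorial (k : ℕ))

/-- The Stein solution `f_{χ_E}` associated to the indicator of `E`:
`f(0) = 0` and `f(k) = ((k-1)!/t^k) Σ_{i=0}^{k-1} (χ_E(i) - ν_t(E)) t^i/i!` for `k ≥ 1`. -/
noncomputable def steinInd (t : ℝ) (E : Set ℕ) : ℕ → ℝ
  | 0 => 0
  | k + 1 => (Nat.factorial k : ℝ) / t ^ (k + 1) *
      ∑ i ∈ Finset.range (k + 1),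
        (E.indicator (fun _ => (1 : ℝ)) i - nuT t E) * t ^ i / (Nat.factorial i)


lemma choose_mono_half (N : ℕ) : ∀ {i j : ℕ}, i ≤ j → 2*j ≤ N → N.choose i ≤ N.choose j := by
  intro i j h hj
  induction j with
  | zero => simp_all
  | succ j ih =>
    rcases Nat.lt_or_ge i (j+1) with h' | h'
    · refine le_trans (ih (by omega) (by omega)) (Nat.choose_le_succ_of_lt_half_left ?_)
      have : j + 1 ≤ N / 2 := (Nat.le_div_iff_mul_le (by norm_num)).2 (by omega)
      omega
    · have : i = j + 1 := by omega
      subst this; exact le_rfl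

lemma binom_sum (k s : ℕ) :
    ∑ i ∈ Finset.range (min k s + 1), (s+k+1).choose i ≤ (s+1) * (s+k+1).choose k := by
  rcases le_or_gt k s with h | h
  · have hmin : min k s = k := by omega
    have step : ∀ i ∈ Finset.range (min k s + 1), (s+k+1).choose i ≤ (s+k+1).choose k :=
      fun i hi => choose_mono_half _ (by simp [hmin] at hi ⊢; omega) (by omega)
    calc ∑ i ∈ Finset.range (min k s + 1), (s+k+1).choose i
        ≤ (min k s + 1) * (s+k+1).choose k := by
          have := Finset.sum_le_card_nsmul _ _ _ step
          simpa using this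
      _ ≤ (s+1) * (s+k+1).choose k := Nat.mul_le_mul_right _ (by omega)
  · have hmin : min k s = s := by omega
    have hsym : (s+k+1).choose (s+1) = (s+k+1).choose k := by
      rw [← Nat.choose_symm (show k ≤ s+k+1 by omega)]
      congr 1; omega
    have hss : (s+k+1).choose s ≤ (s+k+1).choose k := by
      rw [← hsym]; exact choose_mono_half _ (by omega) (by omega)
    have step : ∀ i ∈ Finset.range (min k s + 1), (s+k+1).choose i ≤ (s+k+1).choose k :=
      fun i hi => le_trans (choose_mono_half _ (by simp [hmin] at hi ⊢; omega) (by omega)) hss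
    calc ∑ i ∈ Finset.range (min k s + 1), (s+k+1).choose i
        ≤ (min k s + 1) * (s+k+1).choose k := by
          have := Finset.sum_le_card_nsmul _ _ _ step
          simpa using this
      _ ≤ (s+1) * (s+k+1).choose k := Nat.mul_le_mul_right _ (by omega)

lemma factorial_mul_pow_le (n : ℕ) : ∀ j : ℕ, n.factorial * (n+1)^j ≤ (j + n).factorial := by
  intro j
  induction j with
  | zero => simp
  | succ j ih =>
    calc n.factorial * (n+1)^(j+1) = (n.factorial * (n+1)^j) * (n+1) := by ring
      _ ≤ (j+n).factorial * (j+n+1) := Nat.mul_le_mul ih (by omega)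
      _ = (j+1+n).factorial := by
          rw [show j+1+n = (j+n)+1 by omega, Nat.factorial_succ]; ring


lemma summableP (t : ℝ) : Summable (fun i : ℕ => t^i / i.factorial) := Real.summable_pow_div_factorial t

lemma tsumP (t : ℝ) : ∑' i : ℕ, t^i / i.factorial = Real.exp t := by
  rw [Real.exp_eq_exp_ℝ, NormedSpace.exp_eq_tsum_div]

lemma chi_nonneg (E : Set ℕ) (i : ℕ) : 0 ≤ E.indicator (fun _ => (1:ℝ)) i :=
  Set.indicator_nonneg (fun _ _ => zero_le_one) i

lemma chi_le_one (E : Set ℕ) (i : ℕ) : E.indicator (fun _ => (1:ℝ)) i ≤ 1 := by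
  classical
  rw [Set.indicator_apply]; split <;> norm_num

lemma summable_chiP {t : ℝ} (ht : 0 < t) (E : Set ℕ) :
    Summable (fun i : ℕ => E.indicator (fun _ => (1:ℝ)) i * (t^i / i.factorial)) := by
  refine Summable.of_nonneg_of_le (fun i => ?_) (fun i => ?_) (summableP t)
  · exact mul_nonneg (chi_nonneg E i) (by positivity)
  · calc E.indicator (fun _ => (1:ℝ)) i * (t^i / i.factorial)
        ≤ 1 * (t^i / i.factorial) := by
          apply mul_le_mul_of_nonneg_right (chi_le_one E i) (by positivity)
      _ = t^i / i.factorial := one_mul _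

lemma nuT_eq (t : ℝ) (E : Set ℕ) :
    nuT t E = Real.exp (-t) * ∑' i : ℕ, E.indicator (fun _ => (1:ℝ)) i * (t^i / i.factorial) := by
  classical
  rw [nuT, tsum_subtype E (fun k => Real.exp (-t) * t ^ (k:ℕ) / (Nat.factorial (k:ℕ))), ← tsum_mul_left]
  congr 1 with i
  rw [Set.indicator_apply, Set.indicator_apply]
  split
  · simp; ring
  · simp


set_option maxHeartbeats 1000000 in
lemma steinInd_core {t : ℝ} (ht : 0 < t) (E : Set ℕ) (k : ℕ) :
    |steinInd t E (k+1)| ≤ (Nat.factorial k : ℝ) / t^(k+1) * Real.exp (-t) *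
      ((∑ i ∈ Finset.range (k+1), t^i / i.factorial) *
       (∑' i : ℕ, t^(i+(k+1)) / (i+(k+1)).factorial)) := by
  classical
  set χ : ℕ → ℝ := fun i => E.indicator (fun _ => (1:ℝ)) i with hχ
  set P : ℕ → ℝ := fun i => t^i / i.factorial with hP
  set A : ℝ := ∑ i ∈ Finset.range (k+1), χ i * P i with hA
  set T : ℝ := ∑ i ∈ Finset.range (k+1), P i with hTdef
  set B : ℝ := ∑' i : ℕ, χ (i+(k+1)) * P (i+(k+1)) with hB
  set R : ℝ := ∑' i : ℕ, P (i+(k+1)) with hR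
  have hsummχ := summable_chiP ht E
  have hS : A + B = ∑' i : ℕ, χ i * P i := Summable.sum_add_tsum_nat_add _ hsummχ
  have hT : T + R = Real.exp t := by
    rw [← tsumP t]; exact Summable.sum_add_tsum_nat_add _ (summableP t)
  have hν : nuT t E = Real.exp (-t) * (A + B) := by rw [nuT_eq, hS]
  have hexp : Real.exp (-t) * Real.exp t = 1 := by rw [← Real.exp_add]; simp
  -- rewrite the finite sum
  have hsum : (∑ i ∈ Finset.range (k + 1),
      (χ i - nuT t E) * t ^ i / (Nat.factorial i)) = A - nuT t E * T := by
    rw [hA, hTdef, Finset.mul_sum, ← Finset.sum_sub_distrib]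
    refine Finset.sum_congr rfl (fun i _ => ?_)
    simp only [hP]; ring
  have key : A - nuT t E * T = Real.exp (-t) * (A * R - B * T) := by
    rw [hν]
    linear_combination (-(Real.exp (-t) * A)) * hT + (-A) * hexp
  -- bounds
  have hP0 : ∀ i, 0 ≤ P i := fun i => by simp only [hP]; positivity
  have hA0 : 0 ≤ A := Finset.sum_nonneg fun i _ => mul_nonneg (chi_nonneg E i) (hP0 i)
  have hAT : A ≤ T := Finset.sum_le_sum fun i _ => by
    calc χ i * P i ≤ 1 * P i := mul_le_mul_of_nonneg_right (chi_le_one E i) (hP0 i)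
      _ = P i := one_mul _
  have hsummP' : Summable (fun i : ℕ => P (i+(k+1))) := (summable_nat_add_iff (k+1)).2 (summableP t)
  have hsummχ' : Summable (fun i : ℕ => χ (i+(k+1)) * P (i+(k+1))) :=
    (summable_nat_add_iff (k+1)).2 hsummχ
  have hB0 : 0 ≤ B := tsum_nonneg fun i => mul_nonneg (chi_nonneg E _) (hP0 _)
  have hBR : B ≤ R := Summable.tsum_le_tsum (fun i => by
      calc χ (i+(k+1)) * P (i+(k+1)) ≤ 1 * P (i+(k+1)) :=
            mul_le_mul_of_nonneg_right (chi_le_one E _) (hP0 _)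
        _ = P (i+(k+1)) := one_mul _) hsummχ' hsummP'
  have hT0 : 0 ≤ T := Finset.sum_nonneg fun i _ => hP0 i
  have hR0 : 0 ≤ R := tsum_nonneg fun i => hP0 _
  have habs : |A * R - B * T| ≤ T * R := by
    rw [abs_le]
    constructor <;> nlinarith
  have hstein : steinInd t E (k+1) =
      (Nat.factorial k : ℝ) / t^(k+1) * (Real.exp (-t) * (A * R - B * T)) := by
    show (Nat.factorial k : ℝ) / t ^ (k + 1) * _ = _
    rw [hsum, key]
  rw [hstein, abs_mul, abs_mul]
  have hC : |(Nat.factorial k : ℝ) / t^(k+1)| = (Nat.factorial k : ℝ) / t^(k+1) := by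
    rw [abs_of_nonneg]; positivity
  have he : |Real.exp (-t)| = Real.exp (-t) := abs_of_nonneg (Real.exp_nonneg _)
  rw [hC, he, mul_assoc]
  have hCpos : (0:ℝ) ≤ (Nat.factorial k : ℝ) / t^(k+1) := by positivity
  apply mul_le_mul_of_nonneg_left _ hCpos
  exact mul_le_mul_of_nonneg_left habs (Real.exp_nonneg _)


set_option maxHeartbeats 1000000 in
lemma TR_le {t : ℝ} (ht : 0 < t) (k : ℕ) :
    (∑ i ∈ Finset.range (k+1), t^i / i.factorial) *
      (∑' i : ℕ, t^(i+(k+1)) / (i+(k+1)).factorial)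
      ≤ Real.exp t * t^(k+1) / k.factorial := by
  classical
  set P : ℕ → ℝ := fun i => t^i / i.factorial with hP
  have hP0 : ∀ i, 0 ≤ P i := fun i => by simp only [hP]; positivity
  have hsummP' : Summable (fun j : ℕ => P (j+(k+1))) := (summable_nat_add_iff (k+1)).2 (summableP t)
  set g : ℕ → ℕ → ℝ := fun i s => if i ≤ s then P i * P (s - i + (k+1)) else 0 with hg
  have hinj : ∀ i : ℕ, Function.Injective (fun j : ℕ => j + i) :=
    fun i a b h => by simpa using h
  have hz : ∀ i : ℕ, ∀ x ∉ Set.range (fun j : ℕ => j + i), g i x = 0 := by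
    intro i x hx
    have : ¬ i ≤ x := by
      intro hle
      exact hx ⟨x - i, by show x - i + i = x; omega⟩
    simp [hg, this]
  have hcomp : ∀ i : ℕ, (g i ∘ fun j => j + i) = fun j : ℕ => P i * P (j+(k+1)) := by
    intro i; funext j
    simp [hg, show i ≤ j + i by omega, show j + i - i = j by omega]
  have hrow : ∀ i : ℕ, (∑' j : ℕ, P i * P (j+(k+1))) = ∑' s : ℕ, g i s := by
    intro i
    have := Function.Injective.tsum_eq (hinj i) (f := g i)
      (Function.support_subset_iff'.2 (hz i))
    rw [← this]
    congr 1 with j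
    simp [hg, show i ≤ j + i by omega, show j + i - i = j by omega]
  have hgsumm : ∀ i : ℕ, Summable (g i) := by
    intro i
    rw [← Function.Injective.summable_iff (hinj i) (hz i), hcomp i]
    exact hsummP'.mul_left _
  have hLHS : (∑ i ∈ Finset.range (k+1), P i) * (∑' j : ℕ, P (j+(k+1)))
      = ∑' s : ℕ, ∑ i ∈ Finset.range (k+1), g i s := by
    rw [Finset.sum_mul, Summable.tsum_finsetSum (fun i _ => hgsumm i)]
    refine Finset.sum_congr rfl (fun i _ => ?_)
    rw [← hrow i, tsum_mul_left]
  have hRHS : Real.exp t * t^(k+1) / k.factorial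
      = ∑' s : ℕ, P s * (t^(k+1) / k.factorial) := by
    rw [tsum_mul_right, tsumP]
    ring
  rw [hLHS, hRHS]
  refine Summable.tsum_le_tsum (fun s => ?_) (summable_sum (fun i _ => hgsumm i))
    ((summableP t).mul_right _)
  have hfe : (Finset.range (k+1)).filter (fun i => i ≤ s) = Finset.range (min k s + 1) := by
    ext i; simp
  have h1 : ∑ i ∈ Finset.range (k+1), g i s
      = ∑ i ∈ Finset.range (min k s + 1), P i * P (s - i + (k+1)) := by
    rw [← hfe, Finset.sum_filter]
  rw [h1]
  set N := s + k + 1 with hN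
  have h2 : ∀ i ∈ Finset.range (min k s + 1),
      P i * P (s - i + (k+1)) = t^N / N.factorial * ((N.choose i : ℝ)) := by
    intro i hi
    simp only [Finset.mem_range] at hi
    have his : i ≤ s := by omega
    have hpow : t^i * t^(s - i + (k+1)) = t^N := by
      rw [← pow_add]; congr 1; try omega
    have hNi : N - i = s - i + (k+1) := by omega
    rw [Nat.cast_choose ℝ (show i ≤ N by omega), hNi]
    simp only [hP]
    rw [div_mul_div_comm, hpow]
    have f1 : (i.factorial : ℝ) ≠ 0 := by positivity
    have f2 : ((s - i + (k+1)).factorial : ℝ) ≠ 0 := by positivity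
    have f3 : (N.factorial : ℝ) ≠ 0 := by positivity
    field_simp
  have h3 : (∑ i ∈ Finset.range (min k s + 1), (N.choose i : ℝ))
      ≤ (s+1) * (N.choose k : ℝ) := by exact_mod_cast binom_sum k s
  have h4 : t^N / N.factorial * ((s+1) * (N.choose k : ℝ)) = P s * (t^(k+1) / k.factorial) := by
    rw [Nat.cast_choose ℝ (show k ≤ N by omega), show N - k = s + 1 by omega]
    simp only [hP]
    have hfa : ((s+1).factorial : ℝ) = (s+1) * s.factorial := by
      rw [Nat.factorial_succ]; push_cast; ring
    have hpow : t^N = t^s * t^(k+1) := by rw [← pow_add]; congr 1; try omega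
    rw [hpow, hfa]
    have e2 : (k.factorial : ℝ) ≠ 0 := by positivity
    have e4 : (s.factorial : ℝ) ≠ 0 := by positivity
    have f3 : (N.factorial : ℝ) ≠ 0 := by positivity
    field_simp
  calc ∑ i ∈ Finset.range (min k s + 1), P i * P (s - i + (k+1))
      = t^N / N.factorial * (∑ i ∈ Finset.range (min k s + 1), (N.choose i : ℝ)) := by
        rw [Finset.sum_congr rfl h2, ← Finset.mul_sum]
    _ ≤ t^N / N.factorial * ((s+1) * (N.choose k : ℝ)) :=
        mul_le_mul_of_nonneg_left h3 (by positivity)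
    _ = P s * (t^(k+1) / k.factorial) := h4


lemma steinInd_le_one {t : ℝ} (ht : 0 < t) (E : Set ℕ) (k : ℕ) :
    |steinInd t E (k+1)| ≤ 1 := by
  refine (steinInd_core ht E k).trans ?_
  have h := TR_le ht k
  have hC : (0:ℝ) ≤ (Nat.factorial k : ℝ) / t^(k+1) * Real.exp (-t) := by positivity
  calc (Nat.factorial k : ℝ) / t^(k+1) * Real.exp (-t) *
      ((∑ i ∈ Finset.range (k+1), t^i / i.factorial) *
       (∑' i : ℕ, t^(i+(k+1)) / (i+(k+1)).factorial))
      ≤ (Nat.factorial k : ℝ) / t^(k+1) * Real.exp (-t) *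
        (Real.exp t * t^(k+1) / k.factorial) := mul_le_mul_of_nonneg_left h hC
    _ = 1 := by
        rw [Real.exp_neg]
        have e1 : (k.factorial : ℝ) ≠ 0 := by positivity
        have e2 : t^(k+1) ≠ 0 := by positivity
        have e3 : Real.exp t ≠ 0 := Real.exp_ne_zero t
        field_simp

set_option maxHeartbeats 1000000 in
lemma steinInd_tail {t : ℝ} (ht : 0 < t) (E : Set ℕ) (k : ℕ) (hk : t < k + 1) :
    |steinInd t E (k+1)| ≤ (2 + t) / (k+1) := by
  have hR : (∑' i : ℕ, t^(i+(k+1)) / (i+(k+1)).factorial)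
      ≤ t^(k+1) / (k+1).factorial * ((k+2) / (k+2-t)) := by
    have hq0 : (0:ℝ) ≤ t / (k+2) := by positivity
    have hq1 : t / (k+2) < 1 := by
      rw [div_lt_one (by positivity)]
      push_cast; linarith
    have hterm : ∀ j : ℕ, t^(j+(k+1)) / (j+(k+1)).factorial
        ≤ t^(k+1) / (k+1).factorial * (t/(k+2))^j := by
      intro j
      have hfac : ((k+1).factorial : ℝ) * (k+2)^j ≤ ((j+(k+1)).factorial : ℝ) := by
        have := factorial_mul_pow_le (k+1) j
        push_cast at this ⊢
        exact_mod_cast this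
      have hrw : t^(k+1) / (k+1).factorial * (t/(k+2))^j
          = t^(j+(k+1)) / (((k+1).factorial : ℝ) * (k+2)^j) := by
        rw [div_pow, div_mul_div_comm, ← pow_add]
        congr 2
        omega
      rw [hrw]
      apply div_le_div_of_nonneg_left (by positivity) (by positivity) hfac
    calc (∑' i : ℕ, t^(i+(k+1)) / (i+(k+1)).factorial)
        ≤ ∑' j : ℕ, t^(k+1) / (k+1).factorial * (t/(k+2))^j := by
          refine Summable.tsum_le_tsum hterm ((summable_nat_add_iff (k+1)).2 (summableP t)) ?_
          exact (summable_geometric_of_lt_one hq0 hq1).mul_left _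
      _ = t^(k+1) / (k+1).factorial * ((k+2) / (k+2-t)) := by
          rw [tsum_mul_left, tsum_geometric_of_lt_one hq0 hq1]
          congr 1
          have h1 : (1:ℝ) - t/(k+2) = ((k:ℝ)+2-t)/(k+2) := by field_simp
          rw [h1, inv_div]
  have hT : (∑ i ∈ Finset.range (k+1), t^i / i.factorial) ≤ Real.exp t := by
    have hTR := Summable.sum_add_tsum_nat_add (f := fun i : ℕ => t^i / i.factorial) (k+1) (summableP t)
    have hR0 : (0:ℝ) ≤ ∑' i : ℕ, t^(i+(k+1)) / (i+(k+1)).factorial :=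
      tsum_nonneg (fun i => by positivity)
    rw [tsumP] at hTR
    linarith
  refine (steinInd_core ht E k).trans ?_
  have hR0 : (0:ℝ) ≤ ∑' i : ℕ, t^(i+(k+1)) / (i+(k+1)).factorial :=
    tsum_nonneg (fun i => by positivity)
  have hprod : (∑ i ∈ Finset.range (k+1), t^i / i.factorial) *
      (∑' i : ℕ, t^(i+(k+1)) / (i+(k+1)).factorial)
      ≤ Real.exp t * (t^(k+1) / (k+1).factorial * ((k+2) / (k+2-t))) :=
    mul_le_mul hT hR hR0 (Real.exp_nonneg t)
  have hC : (0:ℝ) ≤ (Nat.factorial k : ℝ) / t^(k+1) * Real.exp (-t) := by positivity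
  calc (Nat.factorial k : ℝ) / t^(k+1) * Real.exp (-t) *
      ((∑ i ∈ Finset.range (k+1), t^i / i.factorial) *
       (∑' i : ℕ, t^(i+(k+1)) / (i+(k+1)).factorial))
      ≤ (Nat.factorial k : ℝ) / t^(k+1) * Real.exp (-t) *
        (Real.exp t * (t^(k+1) / (k+1).factorial * ((k+2) / (k+2-t)))) :=
        mul_le_mul_of_nonneg_left hprod hC
    _ = ((k:ℝ)+2) / (((k:ℝ)+1) * ((k:ℝ)+2-t)) := by
        rw [Real.exp_neg]
        have e1 : (k.factorial : ℝ) ≠ 0 := by positivity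
        have e2 : t^(k+1) ≠ 0 := by positivity
        have e3 : Real.exp t ≠ 0 := Real.exp_ne_zero t
        have e4 : ((k:ℝ)+2-t) ≠ 0 := by linarith
        have e5 : ((k+1).factorial : ℝ) = ((k:ℝ)+1) * k.factorial := by
          rw [Nat.factorial_succ]; push_cast; ring
        rw [e5]
        field_simp
    _ ≤ (2 + t) / (k+1) := by
        have hx : (0:ℝ) < (k:ℝ)+1 := by positivity
        have hd : (0:ℝ) < (k:ℝ)+2-t := by linarith
        rw [div_le_div_iff₀ (mul_pos hx hd) (by positivity)]
        have hk1 : t ≤ (k:ℝ) + 1 := hk.le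
        nlinarith [mul_nonneg (sub_nonneg.2 hk1) hx.le, mul_nonneg (sub_nonneg.2 hk1) ht.le,
          mul_pos ht hx]

lemma harmonic_le_log {K : ℕ} (hK : 1 ≤ K) :
    ∀ m, K ≤ m → ∑ k ∈ Finset.Ioc K m, (1:ℝ)/k ≤ Real.log m - Real.log K := by
  intro m hm
  induction m, hm using Nat.le_induction with
  | base => simp
  | succ m hm ih =>
    rw [Finset.sum_Ioc_succ_top hm]
    have hm0 : (0:ℝ) < m := by
      have : 1 ≤ m := le_trans hK hm
      exact_mod_cast this
    have hm1 : (0:ℝ) < (m:ℝ) + 1 := by linarith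
    have hstep : (1:ℝ)/((m:ℝ)+1) ≤ Real.log ((m:ℝ)+1) - Real.log m := by
      have hlog := Real.log_le_sub_one_of_pos (show (0:ℝ) < (m:ℝ)/((m:ℝ)+1) by positivity)
      rw [Real.log_div (by linarith) (by linarith)] at hlog
      have : (m:ℝ)/((m:ℝ)+1) - 1 = -(1/((m:ℝ)+1)) := by field_simp; ring
      linarith
    push_cast
    linarith

/-- **Lemma (summed bounds on the Stein solution).**
`Σ_{k=1}^m |f_{χ_E}(k)| ≤ m` if `m ≤ t`, and `≤ t + (2+t) log(m/t)` if `m > t`. -/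
theorem steinInd_sum_bounds (t : ℝ) (ht : 0 < t) (E : Set ℕ) (m : ℕ) :
    ((m : ℝ) ≤ t → ∑ k ∈ Finset.Icc 1 m, |steinInd t E k| ≤ (m : ℝ)) ∧
    (t < (m : ℝ) → ∑ k ∈ Finset.Icc 1 m, |steinInd t E k|
        ≤ t + (2 + t) * Real.log ((m : ℝ) / t)) := by
  have hone : ∀ k ∈ Finset.Icc 1 m, |steinInd t E k| ≤ 1 := by
    intro k hk
    simp only [Finset.mem_Icc] at hk
    obtain ⟨j, rfl⟩ : ∃ j, k = j + 1 := ⟨k - 1, by omega⟩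
    exact steinInd_le_one ht E j
  constructor
  · intro _
    calc ∑ k ∈ Finset.Icc 1 m, |steinInd t E k|
        ≤ (Finset.Icc 1 m).card • (1:ℝ) := Finset.sum_le_card_nsmul _ _ _ hone
      _ = (m:ℝ) := by simp [Nat.card_Icc]
  · intro htm
    set K : ℕ := Nat.floor t + 1 with hKdef
    have hKt : t < K := by
      have := Nat.lt_floor_add_one t
      push_cast
      exact_mod_cast this
    have hKle : (K:ℝ) ≤ t + 1 := by
      have := Nat.floor_le ht.le
      rw [hKdef]; push_cast
      linarith
    have hK1 : 1 ≤ K := by omega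
    have hKm : K ≤ m := by
      have : Nat.floor t < m := (Nat.floor_lt ht.le).2 htm
      omega
    have hK0 : (0:ℝ) < K := by exact_mod_cast hK1
    have hsplit : ∑ k ∈ Finset.Icc 1 m, |steinInd t E k|
        = (∑ k ∈ Finset.Ioc 0 K, |steinInd t E k|) + ∑ k ∈ Finset.Ioc K m, |steinInd t E k| := by
      have hicc : Finset.Icc 1 m = Finset.Ioc 0 m := Finset.Icc_add_one_left_eq_Ioc 0 m
      rw [hicc, ← Finset.sum_Ioc_consecutive _ (Nat.zero_le K) hKm]
    have hb1 : (∑ k ∈ Finset.Ioc 0 K, |steinInd t E k|) ≤ (K:ℝ) := by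
      have h := Finset.sum_le_card_nsmul (Finset.Ioc 0 K) (fun k => |steinInd t E k|) 1
        (fun k hk => by
          simp only [Finset.mem_Ioc] at hk
          obtain ⟨j, rfl⟩ : ∃ j, k = j + 1 := ⟨k - 1, by omega⟩
          exact steinInd_le_one ht E j)
      simpa [Nat.card_Ioc] using h
    have hb2 : ∑ k ∈ Finset.Ioc K m, |steinInd t E k|
        ≤ (2+t) * (Real.log m - Real.log K) := by
      calc ∑ k ∈ Finset.Ioc K m, |steinInd t E k|
          ≤ ∑ k ∈ Finset.Ioc K m, (2+t) * (1/(k:ℝ)) := by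
            refine Finset.sum_le_sum (fun k hk => ?_)
            simp only [Finset.mem_Ioc] at hk
            obtain ⟨j, rfl⟩ : ∃ j, k = j + 1 := ⟨k - 1, by omega⟩
            have hkt : t < (j:ℝ) + 1 := by
              have hKj : K ≤ j := by omega
              have : (K:ℝ) ≤ (j:ℝ) := by exact_mod_cast hKj
              linarith
            have := steinInd_tail ht E j hkt
            calc |steinInd t E (j+1)| ≤ (2+t)/((j:ℝ)+1) := by exact_mod_cast this
              _ = (2+t) * (1/((j:ℝ)+1)) := by ring
              _ = (2+t) * (1/(((j+1 : ℕ)):ℝ)) := by push_cast; ring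
        _ = (2+t) * ∑ k ∈ Finset.Ioc K m, (1/(k:ℝ)) := by rw [Finset.mul_sum]
        _ ≤ (2+t) * (Real.log m - Real.log K) := by
            apply mul_le_mul_of_nonneg_left (harmonic_le_log hK1 m hKm) (by linarith)
    have hKlog : (K:ℝ) - t ≤ (2+t) * (Real.log K - Real.log t) := by
      have hlog : 1 - t/(K:ℝ) ≤ Real.log K - Real.log t := by
        have := Real.one_sub_inv_le_log_of_pos (show (0:ℝ) < (K:ℝ)/t by positivity)
        rw [Real.log_div (by positivity) (by positivity)] at this
        have hinv : ((K:ℝ)/t)⁻¹ = t/K := by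
          rw [inv_div]
        rw [hinv] at this
        exact this
      have h4 : (1:ℝ) - t/K = ((K:ℝ) - t)/K := by field_simp
      have h1 : (0:ℝ) ≤ (K:ℝ) - t := by linarith
      have h2 : (0:ℝ) ≤ 2 + t - K := by linarith
      have h5 : (K:ℝ) - t ≤ (2+t) * (((K:ℝ) - t)/K) := by
        have hrw : (2+t) * (((K:ℝ) - t)/K) = ((2+t)*((K:ℝ)-t))/K := by ring
        rw [hrw, le_div_iff₀ hK0]
        nlinarith [mul_nonneg h1 h2]
      calc (K:ℝ) - t ≤ (2+t) * (((K:ℝ) - t)/K) := h5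
        _ = (2+t) * (1 - t/K) := by rw [h4]
        _ ≤ (2+t) * (Real.log K - Real.log t) := by
            apply mul_le_mul_of_nonneg_left hlog (by linarith)
    have hm0 : (0:ℝ) < m := lt_trans ht htm
    rw [hsplit, Real.log_div hm0.ne' ht.ne']
    nlinarith [hb1, hb2, hKlog]
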